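/- Let Γ be a submonoid of ℤ^n containing a finitely generated submonoid Γ₁ such that the convex cone in ℝ^n generated by Γ₁ equals the convex cone generated by Γ and the subgroup of ℤ^n generated by Γ₁ equals the subgroup generated by Γ. Then Γ is finitely generated. -/

import Mathlib

/-- The convex cone in `ℝ^n` generated by a set of integer vectors: all finite
nonnegative real linear combinations of elements of the set. -/
def coneGen (n : ℕ) (S : Set (Fin n → ℤ)) : Set (Fin n → ℝ) :=
  {x | ∃ (m : ℕ) (c : Fin m → ℝ) (v : Fin m → (Fin n → ℤ)),
    (∀ i, 0 ≤ c i) ∧ (∀ i, v i ∈ S) ∧ x = ∑ i, c i • (fun k => ((v i k : ℤ) : ℝ))}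

def castR {n : ℕ} : (Fin n → ℤ) →+ (Fin n → ℝ) where
  toFun x := fun k => ((x k : ℤ) : ℝ)
  map_zero' := by funext k; simp
  map_add' x y := by funext k; simp

theorem dickson_fin {s : ℕ} (S : Set (Fin s → ℕ)) :
    ∃ F : Set (Fin s → ℕ), F.Finite ∧ F ⊆ S ∧ ∀ x ∈ S, ∃ f ∈ F, f ≤ x := by
  classical
  set M : Set (Fin s → ℕ) := {x ∈ S | ∀ y ∈ S, y ≤ x → y = x} with hM
  have hpwo : ∀ T : Set (Fin s → ℕ), T.IsPWO := fun T =>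
    Set.isPWO_of_wellQuasiOrderedLE T
  refine ⟨M, ?_, fun x hx => hx.1, ?_⟩
  · refine IsAntichain.finite_of_partiallyWellOrderedOn ?_ (hpwo M)
    intro a ha b hb hne hle
    exact hne (hb.2 a ha.1 hle)
  · intro x hx
    have hT : Set.IsWF {y ∈ S | y ≤ x} := ((hpwo S).isWF).mono (fun y hy => hy.1)
    have hne : {y ∈ S | y ≤ x}.Nonempty := ⟨x, hx, le_refl x⟩
    refine ⟨hT.min hne, ⟨(hT.min_mem hne).1, ?_⟩, (hT.min_mem hne).2⟩
    intro y hy hyle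
    by_contra hne2
    exact hT.not_lt_min hne ⟨hy, hyle.trans (hT.min_mem hne).2⟩
      (lt_of_le_of_ne hyle hne2)

theorem mem_closure_range_iff {M : Type*} [AddCommMonoid M] {s : ℕ} (v : Fin s → M) (x : M) :
    x ∈ AddSubmonoid.closure (Set.range v) ↔ ∃ a : Fin s → ℕ, ∑ i, a i • v i = x := by
  constructor
  · intro hx
    induction hx using AddSubmonoid.closure_induction with
    | mem y hy =>
      obtain ⟨i, rfl⟩ := hy
      exact ⟨Pi.single i 1, by simp [Pi.single_apply, Finset.sum_ite_eq']⟩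
    | zero => exact ⟨0, by simp⟩
    | add y z _ _ hy hz =>
      obtain ⟨a, rfl⟩ := hy; obtain ⟨b, rfl⟩ := hz
      exact ⟨a + b, by simp [add_smul, Finset.sum_add_distrib]⟩
  · rintro ⟨a, rfl⟩
    exact AddSubmonoid.sum_mem _ fun i _ =>
      AddSubmonoid.nsmul_mem _ (AddSubmonoid.subset_closure (Set.mem_range_self i)) _

theorem coneGen_of_closure_range {n s : ℕ} (v : Fin s → (Fin n → ℤ)) (x : Fin n → ℝ)
    (hx : x ∈ coneGen n ((AddSubmonoid.closure (Set.range v) : AddSubmonoid (Fin n → ℤ)) : Set (Fin n → ℤ))) :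
    ∃ d : Fin s → ℝ, (∀ i, 0 ≤ d i) ∧ x = ∑ i, d i • castR (v i) := by
  obtain ⟨m, c, w, hc, hw, rfl⟩ := hx
  choose a ha using fun j => (mem_closure_range_iff v (w j)).1 (hw j)
  refine ⟨fun i => ∑ j, c j * (a j i : ℝ), fun i => Finset.sum_nonneg fun j _ =>
    mul_nonneg (hc j) (by positivity), ?_⟩
  have key : ∀ j, (fun k => ((w j k : ℤ) : ℝ)) = ∑ i, (a j i : ℝ) • castR (v i) := by
    intro j
    funext k
    rw [← ha j]
    simp [castR, Finset.sum_apply]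
  calc ∑ j, c j • (fun k => ((w j k : ℤ) : ℝ))
      = ∑ j, ∑ i, (c j * (a j i : ℝ)) • castR (v i) := by
        refine Finset.sum_congr rfl fun j _ => ?_
        rw [key j, Finset.smul_sum]
        exact Finset.sum_congr rfl fun i _ => (mul_smul _ _ _).symm
    _ = ∑ i, (∑ j, c j * (a j i : ℝ)) • castR (v i) := by
        rw [Finset.sum_comm]
        exact Finset.sum_congr rfl fun i _ => (Finset.sum_smul).symm

/-- Corollary (fincone): a submonoid `Γ` of `ℤ^n` containing a finitely generated
submonoid `Γ₁` generating the same convex cone and the same subgroup is finitely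
generated. -/
theorem fg_of_fg_subsemigroup_same_cone (n : ℕ) (Γ₁ Γ : AddSubmonoid (Fin n → ℤ))
    (hle : Γ₁ ≤ Γ) (hfg : Γ₁.FG)
    (hcone : coneGen n (Γ₁ : Set (Fin n → ℤ)) = coneGen n (Γ : Set (Fin n → ℤ)))
    (hgrp : AddSubgroup.closure (Γ₁ : Set (Fin n → ℤ))
      = AddSubgroup.closure (Γ : Set (Fin n → ℤ))) :
    Γ.FG := by
  classical
  obtain ⟨Vfin, hV⟩ := hfg
  set s := Vfin.card with hs
  set v : Fin s → (Fin n → ℤ) := fun i => (Vfin.equivFin.symm i : Fin n → ℤ) with hv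
  have hvr : Set.range v = (Vfin : Set (Fin n → ℤ)) := by
    ext x
    constructor
    · rintro ⟨i, rfl⟩; exact (Vfin.equivFin.symm i).2
    · intro hx; exact ⟨Vfin.equivFin ⟨x, hx⟩, by simp [hv]⟩
  have hΓ₁ : Γ₁ = AddSubmonoid.closure (Set.range v) := by rw [hvr, hV]
  -- the monoid combination map
  set φ : (Fin s → ℕ) → (Fin n → ℤ) := fun a => ∑ i, a i • v i with hφ
  have hφΓ₁ : ∀ a, φ a ∈ Γ₁ := fun a => by
    rw [hΓ₁]; exact (mem_closure_range_iff v _).2 ⟨a, rfl⟩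
  -- bounding box
  set B : Fin n → ℤ := fun k => ∑ i, |v i k| with hB
  set Box : Set (Fin n → ℤ) := {x | ∀ k, |x k| ≤ B k} with hBox
  have hBoxFin : Box.Finite := by
    have : Box ⊆ Set.pi Set.univ (fun k => Set.Icc (-B k) (B k)) := by
      intro x hx k _
      exact Set.mem_Icc.2 (abs_le.1 (hx k))
    exact Set.Finite.subset (Set.Finite.pi fun k => Set.finite_Icc _ _) this
  -- the key decomposition of elements of Γ
  have decomp : ∀ γ ∈ Γ, ∃ (a : Fin s → ℕ) (r : Fin n → ℤ),
      γ = φ a + r ∧ r ∈ Box := by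
    intro γ hγ
    have h1 : castR γ ∈ coneGen n (Γ : Set (Fin n → ℤ)) := by
      refine ⟨1, fun _ => 1, fun _ => γ, fun _ => zero_le_one, fun _ => hγ, ?_⟩
      funext k; simp [castR]
    rw [← hcone, hΓ₁] at h1
    obtain ⟨d, hd0, hd⟩ := coneGen_of_closure_range v _ h1
    set a : Fin s → ℕ := fun i => ⌊d i⌋₊ with ha
    refine ⟨a, γ - φ a, by abel, ?_⟩
    -- real form of the remainder
    have hcastφ : castR (φ a) = ∑ i, ((a i : ℝ)) • castR (v i) := by
      rw [hφ]
      simp only [map_sum, map_nsmul]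
      exact Finset.sum_congr rfl fun i _ => (Nat.cast_smul_eq_nsmul ℝ _ _).symm
    have hrem : castR (γ - φ a) = ∑ i, (d i - (a i : ℝ)) • castR (v i) := by
      rw [map_sub, hd, hcastφ, ← Finset.sum_sub_distrib]
      exact Finset.sum_congr rfl fun i _ => (sub_smul _ _ _).symm
    intro k
    have h01 : ∀ i, 0 ≤ d i - (a i : ℝ) ∧ d i - (a i : ℝ) < 1 := fun i =>
      ⟨sub_nonneg.2 (Nat.floor_le (hd0 i)), sub_lt_iff_lt_add'.2 (Nat.lt_floor_add_one (d i))⟩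
    have hreal : |(((γ - φ a) k : ℤ) : ℝ)| ≤ ((B k : ℤ) : ℝ) := by
      have : (((γ - φ a) k : ℤ) : ℝ) = ∑ i, (d i - (a i : ℝ)) * ((v i k : ℤ) : ℝ) := by
        have := congrFun hrem k
        simpa [castR, Finset.sum_apply] using this
      rw [this, hB]
      push_cast
      refine (Finset.abs_sum_le_sum_abs _ _).trans ?_
      refine Finset.sum_le_sum fun i _ => ?_
      rw [abs_mul]
      calc |d i - (a i : ℝ)| * |((v i k : ℤ) : ℝ)|
          ≤ 1 * |((v i k : ℤ) : ℝ)| := by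
            refine mul_le_mul_of_nonneg_right ?_ (abs_nonneg _)
            rw [abs_of_nonneg (h01 i).1]
            exact le_of_lt (h01 i).2
        _ = |((v i k : ℤ) : ℝ)| := one_mul _
    exact_mod_cast (by simpa using hreal : |(((γ - φ a) k : ℤ) : ℝ)| ≤ ((B k : ℤ) : ℝ))
  -- ideals and Dickson
  set J : (Fin n → ℤ) → Set (Fin s → ℕ) := fun r => {a | φ a + r ∈ Γ} with hJ
  choose F hFfin hFsub hFdom using fun r => dickson_fin (J r)
  -- the finite generating set
  set T : Set (Fin n → ℤ) :=
    Set.range v ∪ ⋃ r ∈ Box, (fun a => φ a + r) '' (F r) with hT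
  have hTfin : T.Finite := by
    refine Set.Finite.union (Set.finite_range v) ?_
    exact Set.Finite.biUnion hBoxFin fun r _ => Set.Finite.image _ (hFfin r)
  have hTsub : T ⊆ (Γ : Set (Fin n → ℤ)) := by
    rintro x (⟨i, rfl⟩ | hx)
    · exact hle (hΓ₁ ▸ AddSubmonoid.subset_closure (Set.mem_range_self i))
    · simp only [Set.mem_iUnion] at hx
      obtain ⟨r, _, a, haF, rfl⟩ := hx
      exact hFsub r haF
  have hΓle : Γ ≤ AddSubmonoid.closure T := by
    intro γ hγ
    obtain ⟨a, r, hγeq, hrBox⟩ := decomp γ hγ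
    have haJ : a ∈ J r := by
      show φ a + r ∈ Γ
      rw [← hγeq]; exact hγ
    obtain ⟨f, hfF, hfa⟩ := hFdom r a haJ
    have hsplit : γ = (φ f + r) + φ (a - f) := by
      rw [hγeq]
      have : φ a = φ f + φ (a - f) := by
        rw [hφ]
        simp only
        rw [← Finset.sum_add_distrib]
        refine Finset.sum_congr rfl fun i _ => ?_
        rw [← add_smul]
        congr 1
        exact (Nat.add_sub_cancel' (hfa i)).symm
      rw [this]; abel
    rw [hsplit]
    refine AddSubmonoid.add_mem _ ?_ ?_
    · refine AddSubmonoid.subset_closure (Set.mem_union_right _ ?_)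
      simp only [Set.mem_iUnion]
      exact ⟨r, hrBox, f, hfF, rfl⟩
    · show (∑ i, (a - f) i • v i) ∈ AddSubmonoid.closure T
      exact AddSubmonoid.sum_mem (AddSubmonoid.closure T) fun i _ =>
        AddSubmonoid.nsmul_mem (AddSubmonoid.closure T)
          (AddSubmonoid.subset_closure (Set.mem_union_left _ (Set.mem_range_self i))) _
  refine ⟨hTfin.toFinset, ?_⟩
  rw [Set.Finite.coe_toFinset]
  exact le_antisymm ((AddSubmonoid.closure_le).2 hTsub) hΓle
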